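/- If C is a linear code over Z_{p^s} of length n with minimum extended Lee distance d, then ⌊(d-1)/p^{s-1}⌋ ≤ n - log_{p^s}|C| (Singleton bound for the extended Lee weight). -/

import Mathlib

/-- The extended Lee weight on `ZMod (p^s)`. -/
def leeWt (p s : ℕ) (x : ZMod (p ^ s)) : ℕ :=
  if x.val ≤ p ^ s - p ^ (s - 1) then min x.val (p ^ (s - 1)) else p ^ s - x.val

/-- The extended Lee weight of a vector, extended coordinatewise. -/
def leeWtV (p s n : ℕ) (x : Fin n → ZMod (p ^ s)) : ℕ :=
  ∑ i, leeWt p s (x i)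

lemma leeWt_le (p s : ℕ) (x : ZMod (p ^ s)) : leeWt p s x ≤ p ^ (s - 1) := by
  unfold leeWt; split
  · exact min_le_right _ _
  · omega

lemma leeWt_eq_zero (p s : ℕ) [NeZero (p ^ s)] (hp : 0 < p) (x : ZMod (p ^ s)) :
    leeWt p s x = 0 ↔ x = 0 := by
  have hv : x.val < p ^ s := ZMod.val_lt x
  have hm : 0 < p ^ (s - 1) := pow_pos hp _
  unfold leeWt
  rw [← ZMod.val_eq_zero]
  split <;> omega

/-- Singleton bound for the extended Lee weight: if `C` is a linear code over
`ZMod (p^s)` of length `n` with minimum Lee distance `d`, then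
`⌊(d-1)/p^(s-1)⌋ ≤ n - log_{p^s} |C|`. -/
theorem lee_singleton_bound (p s n d : ℕ) (hp : p.Prime) (hs : 1 ≤ s)
    (C : Submodule (ZMod (p ^ s)) (Fin n → ZMod (p ^ s)))
    (hex : ∃ c ∈ C, c ≠ 0 ∧ leeWtV p s n c = d)
    (hmin : ∀ c ∈ C, c ≠ 0 → d ≤ leeWtV p s n c) :
    (((d - 1) / p ^ (s - 1) : ℕ) : ℝ) ≤
      (n : ℝ) - Real.logb ((p : ℝ) ^ s) (Nat.card C) := by
  have hq1 : 1 < p ^ s := Nat.one_lt_pow (by omega) hp.one_lt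
  haveI : NeZero (p ^ s) := ⟨by omega⟩
  set m := p ^ (s - 1) with hm
  have hm1 : 1 ≤ m := Nat.one_le_pow _ _ hp.pos
  set k := (d - 1) / m with hk
  obtain ⟨c, hcC, hc0, hcd⟩ := hex
  -- d ≥ 1
  have hd1 : 1 ≤ d := by
    rcases Nat.eq_zero_or_pos d with h | h
    · exfalso
      apply hc0
      funext i
      have h0 : leeWtV p s n c = 0 := by omega
      unfold leeWtV at h0
      have := Finset.sum_eq_zero_iff.mp h0 i (Finset.mem_univ i)
      exact (leeWt_eq_zero p s hp.pos (c i)).mp this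
    · exact h
  have hdn : d ≤ n * m := by
    rw [← hcd]
    calc leeWtV p s n c ≤ ∑ _i : Fin n, m := Finset.sum_le_sum fun i _ => leeWt_le p s (c i)
    _ = n * m := by simp [mul_comm]
  have hkm : k * m ≤ d - 1 := Nat.div_mul_le_self _ _
  have hkn : k ≤ n := by
    have : k * m < n * m := by omega
    exact le_of_lt (Nat.lt_of_mul_lt_mul_right this)
  -- the projection onto coordinates ≥ k is injective on C
  set T := {i : Fin n // k ≤ (i : ℕ)} with hT
  have hinj : Function.Injective (fun (x : C) (i : T) => (x : Fin n → ZMod (p ^ s)) i.1) := by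
    intro a b hab
    by_contra hne
    set c' : Fin n → ZMod (p ^ s) := (a : Fin n → ZMod (p ^ s)) - b with hc'
    have hc'C : c' ∈ C := sub_mem a.2 b.2
    have hc'0 : c' ≠ 0 := by
      intro h
      exact hne (Subtype.ext (by rwa [sub_eq_zero] at h))
    have hzero : ∀ i : Fin n, k ≤ (i : ℕ) → c' i = 0 := by
      intro i hi
      have := congrFun hab ⟨i, hi⟩
      simpa [hc', sub_eq_zero] using this
    have hle : leeWtV p s n c' ≤ k * m := by
      unfold leeWtV
      rw [← Finset.sum_filter_add_sum_filter_not Finset.univ (fun i : Fin n => (i : ℕ) < k)]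
      have h2 : ∑ i ∈ Finset.univ.filter (fun i : Fin n => ¬ (i : ℕ) < k), leeWt p s (c' i) = 0 := by
        apply Finset.sum_eq_zero
        intro i hi
        rw [hzero i (by simpa using (Finset.mem_filter.mp hi).2)]
        exact (leeWt_eq_zero p s hp.pos 0).mpr rfl
      rw [h2, add_zero]
      calc ∑ i ∈ Finset.univ.filter (fun i : Fin n => (i : ℕ) < k), leeWt p s (c' i)
          ≤ (Finset.univ.filter (fun i : Fin n => (i : ℕ) < k)).card * m :=
            Finset.sum_le_card_nsmul _ _ _ (fun i _ => leeWt_le p s (c' i))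
        _ ≤ k * m := by
            apply Nat.mul_le_mul_right
            calc (Finset.univ.filter (fun i : Fin n => (i : ℕ) < k)).card
                ≤ (Finset.range k).card := by
                  refine Finset.card_le_card_of_injOn (fun i : Fin n => (i : ℕ)) ?_ ?_
                  · intro i hi
                    simpa [Finset.mem_range] using (Finset.mem_filter.mp hi).2
                  · intro i _ j _ h
                    exact Fin.ext h
              _ = k := Finset.card_range k
    have := hmin c' hc'C hc'0
    omega
  have hcardT : Fintype.card T ≤ n - k := by
    have hinjT : Function.Injective
        (fun i : T => (⟨(i : Fin n).val - k, by have := i.2; have := (i : Fin n).isLt; omega⟩ :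
          Fin (n - k))) := by
      intro i j h
      have h1 : (i : Fin n).val - k = (j : Fin n).val - k := congrArg Fin.val h
      have h2 := i.2
      have h3 := j.2
      exact Subtype.ext (Fin.ext (by omega))
    simpa using Fintype.card_le_of_injective _ hinjT
  haveI : Finite C := Subtype.finite
  have hpos : 0 < Nat.card C := Nat.card_pos
  have hcardC : Nat.card C ≤ (p ^ s) ^ (n - k) := by
    calc Nat.card C ≤ Nat.card (T → ZMod (p ^ s)) :=
          Nat.card_le_card_of_injective _ hinj
      _ = (p ^ s) ^ Fintype.card T := by
          simp [Nat.card_eq_fintype_card, Fintype.card_fun, ZMod.card]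
      _ ≤ (p ^ s) ^ (n - k) := Nat.pow_le_pow_right (by omega) hcardT
  have hb : (1 : ℝ) < (p : ℝ) ^ s := by
    have : ((1 : ℕ) : ℝ) < ((p ^ s : ℕ) : ℝ) := Nat.cast_lt.mpr hq1
    push_cast at this
    exact this
  have hlog : Real.logb ((p : ℝ) ^ s) (Nat.card C) ≤ ((n : ℝ) - (k : ℝ)) := by
    have h1 : Real.logb ((p : ℝ) ^ s) (Nat.card C) ≤
        Real.logb ((p : ℝ) ^ s) (((p ^ s) ^ (n - k) : ℕ) : ℝ) := by
      apply Real.logb_le_logb_of_le hb (by exact_mod_cast hpos)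
      exact_mod_cast hcardC
    have h2 : Real.logb ((p : ℝ) ^ s) (((p ^ s) ^ (n - k) : ℕ) : ℝ) = ((n - k : ℕ) : ℝ) := by
      push_cast
      rw [Real.logb_pow, Real.logb_self_eq_one hb]
      ring
    rw [h2] at h1
    have h3 : ((n - k : ℕ) : ℝ) = (n : ℝ) - (k : ℝ) := by
      rw [Nat.cast_sub hkn]
    linarith [h1, h3.le, h3.ge]
  linarith
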